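/- Assume the Problem-C setup. Suppose there exist maps L_n : F → F_n (n ∈ ℕ) such that: (a) for every f ∈ B \ {0} there exists a sequence f_n ∈ B_n with lim_{n→∞} ‖L_n(f) − f_n‖*_n = 0; (b) for every h ∈ B, liminf_{n→∞} E_n(L_n(h), G_n) ≥ E(h, G). Then sup_{f ∈ B \ {0}} E(f, G) ≤ liminf_{n→∞} sup_{f ∈ B_n} E_n(f, G_n). -/

import Mathlib

open Filter Topology NNReal ENNReal


private lemma liminf_add_le_aux {u v : ℕ → ℝ≥0∞} (hu : Filter.Tendsto u Filter.atTop (nhds 0)) :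
    Filter.liminf (fun n => u n + v n) Filter.atTop ≤ Filter.liminf v Filter.atTop := by
  refine ENNReal.le_of_forall_pos_le_add fun δ hδ _ => ?_
  have hδ' : (0 : ℝ≥0∞) < δ := by exact_mod_cast hδ
  have hev : ∀ᶠ n in Filter.atTop, u n + v n ≤ v n + δ := by
    filter_upwards [hu.eventually_lt_const hδ'] with n hn
    rw [add_comm (v n)]
    exact add_le_add hn.le le_rfl
  refine (Filter.liminf_le_liminf hev).trans ?_
  rw [Filter.liminf_eq_iSup_iInf_of_nat, Filter.liminf_eq_iSup_iInf_of_nat]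
  have h : ∀ n : ℕ, (⨅ i ≥ n, (v i + (δ : ℝ≥0∞))) = (⨅ i ≥ n, v i) + δ := by
    intro n
    rw [ENNReal.iInf_add]
    exact iInf_congr fun i => by rw [ENNReal.iInf_add]
  simp_rw [h]
  exact iSup_le fun n => add_le_add (le_iSup (fun n => ⨅ i ≥ n, v i) n) le_rfl

/-- Corollary 2.19 (i), Problem C: under conditions (a) and (b) on the
operators `L_n`, one has
`sup_{f ∈ B \ {0}} E(f, G) ≤ liminf_n sup_{f ∈ B_n} E_n(f, G_n)`. -/
theorem sup_best_approx_le_liminf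
    (β : ℝ) (hβ0 : 0 < β) (hβ1 : β ≤ 1)
    -- the β-normed space F with subspace G
    (F : Type*) [AddCommGroup F] [Module ℂ F] (Ns : F → ℝ≥0)
    (hN0 : ∀ f : F, Ns f = 0 ↔ f = 0)
    (hNh : ∀ (α : ℂ) (f : F), Ns (α • f) = ‖α‖₊ * Ns f)
    (hNt : ∀ f g : F, Ns (f + g) ^ β ≤ Ns f ^ β + Ns g ^ β)
    (G : Submodule ℂ F)
    -- the β-normed spaces F_n with subspaces G_n
    (Fn : ℕ → Type*) [∀ n, AddCommGroup (Fn n)] [∀ n, Module ℂ (Fn n)]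
    (Nsn : ∀ n, Fn n → ℝ≥0)
    (hN0n : ∀ n (f : Fn n), Nsn n f = 0 ↔ f = 0)
    (hNhn : ∀ n (α : ℂ) (f : Fn n), Nsn n (α • f) = ‖α‖₊ * Nsn n f)
    (hNtn : ∀ n (f g : Fn n), Nsn n (f + g) ^ β ≤ Nsn n f ^ β + Nsn n g ^ β)
    (Gn : ∀ n, Submodule ℂ (Fn n))
    -- the nonempty subsets B and B_n
    (B : Set F) (hBne : B.Nonempty)
    (Bn : ∀ n, Set (Fn n)) (hBnne : ∀ n, (Bn n).Nonempty)
    -- the operators L_n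
    (L : ∀ n, F → Fn n)
    -- (a)
    (ha : ∀ f ∈ B, f ≠ 0 → ∃ fn : ∀ n, Fn n, (∀ n, fn n ∈ Bn n) ∧
        Filter.Tendsto (fun n => Nsn n (L n f - fn n)) Filter.atTop (nhds 0))
    -- (b)
    (hb : ∀ h ∈ B, (⨅ g ∈ (G : Set F), (Ns (h - g) : ℝ≥0∞))
        ≤ Filter.liminf
            (fun n => ⨅ g ∈ (Gn n : Set (Fn n)), (Nsn n (L n h - g) : ℝ≥0∞))
            Filter.atTop) :
    (⨆ f ∈ B \ {0}, ⨅ g ∈ (G : Set F), (Ns (f - g) : ℝ≥0∞))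
      ≤ Filter.liminf
          (fun n => ⨆ f ∈ Bn n, ⨅ g ∈ (Gn n : Set (Fn n)), (Nsn n (f - g) : ℝ≥0∞))
          Filter.atTop := by
  set φ := ENNReal.orderIsoRpow β hβ0 with hφdef
  have hφ : ∀ x : ℝ≥0∞, φ x = x ^ β := fun x => by
    rw [hφdef, ENNReal.orderIsoRpow_apply]
  set S : ℕ → ℝ≥0∞ :=
    fun n => ⨆ f ∈ Bn n, ⨅ g ∈ (Gn n : Set (Fn n)), (Nsn n (f - g) : ℝ≥0∞) with hSdef
  refine iSup₂_le fun f hf => ?_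
  obtain ⟨fn, hfnB, hfn⟩ := ha f hf.1 (by simpa using hf.2)
  refine le_trans (hb f hf.1) ?_
  set A : ℕ → ℝ≥0∞ :=
    fun n => ⨅ g ∈ (Gn n : Set (Fn n)), (Nsn n (L n f - g) : ℝ≥0∞) with hAdef
  set ε : ℕ → ℝ≥0∞ := fun n => ((Nsn n (L n f - fn n)) ^ β : ℝ≥0) with hεdef
  -- ε tends to 0
  have hεlim : Tendsto ε atTop (nhds 0) := by
    have h1 : Tendsto (fun n => Nsn n (L n f - fn n) ^ β) atTop (nhds (0 : ℝ≥0)) := by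
      have h2 := ((NNReal.continuous_rpow_const hβ0.le).tendsto 0).comp hfn
      simpa [Function.comp_def, NNReal.zero_rpow hβ0.ne'] using h2
    have h3 := ENNReal.tendsto_coe.2 h1
    simpa [hεdef] using h3
  -- key pointwise estimate: φ (A n) ≤ ε n + φ (S n)
  have key : ∀ n, φ (A n) ≤ ε n + φ (S n) := by
    intro n
    have hmap : ∀ h : Fn n,
        φ (⨅ g ∈ (Gn n : Set (Fn n)), (Nsn n (h - g) : ℝ≥0∞))
          = ⨅ g ∈ (Gn n : Set (Fn n)), ((Nsn n (h - g) : ℝ≥0∞)) ^ β := by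
      intro h
      rw [φ.map_iInf]
      refine iInf_congr fun g => ?_
      rw [φ.map_iInf]
      exact iInf_congr fun _ => hφ _
    have hsub : φ (A n) - ε n ≤ φ (S n) := by
      have hI : φ (A n) - ε n ≤
          ⨅ g ∈ (Gn n : Set (Fn n)), ((Nsn n (fn n - g) : ℝ≥0∞)) ^ β := by
        refine le_iInf₂ fun g hg => ?_
        rw [tsub_le_iff_right]
        have hA_le : A n ≤ (Nsn n (L n f - g) : ℝ≥0∞) := biInf_le _ hg
        have h1 : φ (A n) ≤ ((Nsn n (L n f - g) : ℝ≥0∞)) ^ β := by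
          rw [← hφ]; exact φ.monotone hA_le
        refine h1.trans ?_
        rw [← ENNReal.coe_rpow_of_nonneg _ hβ0.le, ← ENNReal.coe_rpow_of_nonneg _ hβ0.le,
          hεdef, ← ENNReal.coe_add, ENNReal.coe_le_coe]
        have h2 := hNtn n (fn n - g) (L n f - fn n)
        rwa [show (fn n - g) + (L n f - fn n) = L n f - g by abel] at h2
      refine hI.trans ?_
      rw [← hmap (fn n)]
      exact φ.monotone (le_iSup₂ (f := fun h (_ : h ∈ Bn n) =>
        ⨅ g ∈ (Gn n : Set (Fn n)), (Nsn n (h - g) : ℝ≥0∞)) (fn n) (hfnB n))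
    rw [tsub_le_iff_right, add_comm] at hsub
    exact hsub
  -- conclude via liminf
  have h1 : φ (liminf A atTop) = liminf (fun n => φ (A n)) atTop := φ.liminf_apply
  have h2 : φ (liminf S atTop) = liminf (fun n => φ (S n)) atTop := φ.liminf_apply
  rw [← φ.le_iff_le, h1, h2]
  refine (liminf_le_liminf (Filter.Eventually.of_forall key)).trans ?_
  exact liminf_add_le_aux hεlim
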